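/- Let n ≥ 1, let w₁,…,wₙ ∈ ℂ all lie in the closed unit disk D̄(0,1), and let z ∈ ℂ with |z| > 1. Then 1/(|z|+1) ≤ | (1/n) ∑_{i=1}^{n} 1/(z − wᵢ) | ≤ 1/(|z|−1). -/

import Mathlib

open Complex
open scoped BigOperators

lemma key_disk (z w : ℂ) (hw : ‖w‖ ≤ 1) (hz : 1 < ‖z‖) :
    ‖1 / (z - w) - (starRingEnd ℂ) z / ((‖z‖ ^ 2 - 1 : ℝ) : ℂ)‖ ≤
      1 / (‖z‖ ^ 2 - 1) := by
  set a := ‖z‖ with ha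
  have hs : (0 : ℝ) < a ^ 2 - 1 := by nlinarith
  have habs : a - 1 ≤ ‖z - w‖ := by
    have h := norm_sub_norm_le z w
    linarith
  have hpos : 0 < ‖z - w‖ := by linarith
  have hne : z - w ≠ 0 := by
    intro h
    rw [h] at hpos
    simp at hpos
  have hnum : ‖(starRingEnd ℂ) z * w - 1‖ ≤ ‖z - w‖ := by
    have h1 : Complex.normSq ((starRingEnd ℂ) z * w - 1) ≤ Complex.normSq (z - w) := by
      have hw2 : w.re * w.re + w.im * w.im ≤ 1 := by
        have : ‖w‖ ^ 2 ≤ 1 := by nlinarith [norm_nonneg w]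
        rw [Complex.sq_norm, Complex.normSq_apply] at this
        exact this
      have hz2 : 1 ≤ z.re * z.re + z.im * z.im := by
        have : 1 ≤ ‖z‖ ^ 2 := by nlinarith
        rw [Complex.sq_norm, Complex.normSq_apply] at this
        exact this
      simp only [Complex.normSq_apply, Complex.sub_re, Complex.sub_im, Complex.mul_re,
        Complex.mul_im, Complex.conj_re, Complex.conj_im, Complex.one_re, Complex.one_im]
      nlinarith [sq_nonneg (z.re * w.re + z.im * w.im), sq_nonneg (z.re * w.im - z.im * w.re)]
    have := Real.sqrt_le_sqrt h1
    simpa [Complex.norm_def] using this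
  have hzz : z * (starRingEnd ℂ) z = ((a : ℝ) : ℂ) ^ 2 := by
    rw [Complex.mul_conj]
    norm_cast
    rw [ha, Complex.sq_norm]
  have hs' : ((a ^ 2 - 1 : ℝ) : ℂ) ≠ 0 := by
    exact_mod_cast ne_of_gt hs
  have hnum_eq : 1 * ((a ^ 2 - 1 : ℝ) : ℂ) - (z - w) * (starRingEnd ℂ) z =
      (starRingEnd ℂ) z * w - 1 := by
    push_cast
    linear_combination -hzz
  have heq : 1 / (z - w) - (starRingEnd ℂ) z / ((a ^ 2 - 1 : ℝ) : ℂ) =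
      ((starRingEnd ℂ) z * w - 1) / ((z - w) * ((a ^ 2 - 1 : ℝ) : ℂ)) := by
    rw [div_sub_div _ _ hne hs', hnum_eq]
  rw [heq, norm_div, norm_mul]
  have habsc : ‖((a ^ 2 - 1 : ℝ) : ℂ)‖ = a ^ 2 - 1 := by
    rw [Complex.norm_real, Real.norm_eq_abs, abs_of_pos hs]
  rw [habsc, div_le_div_iff₀ (by positivity) hs]
  nlinarith [norm_nonneg ((starRingEnd ℂ) z * w - 1)]

/-- If `w₁,…,wₙ` lie in the closed unit disk and `|z| > 1`, then the modulus of the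
average `(1/n) ∑ 1/(z - wᵢ)` lies between `1/(|z|+1)` and `1/(|z|-1)`. -/
theorem average_inverse_modulus_bounds (n : ℕ) (hn : 1 ≤ n)
    (w : Fin n → ℂ) (hw : ∀ i, ‖w i‖ ≤ 1)
    (z : ℂ) (hz : 1 < ‖z‖) :
    1 / (‖z‖ + 1) ≤ ‖(1 / (n : ℂ)) * ∑ i, 1 / (z - w i)‖ ∧
    ‖(1 / (n : ℂ)) * ∑ i, 1 / (z - w i)‖ ≤ 1 / (‖z‖ - 1) := by
  have hn0 : (n : ℂ) ≠ 0 := Nat.cast_ne_zero.mpr (by omega)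
  have hnR : (0 : ℝ) < (n : ℝ) := by exact_mod_cast Nat.pos_of_ne_zero (by omega)
  set a := ‖z‖ with ha
  have ha1 : (0 : ℝ) < a - 1 := by linarith
  have hs : (0 : ℝ) < a ^ 2 - 1 := by nlinarith
  have hterm : ∀ i, a - 1 ≤ ‖z - w i‖ := by
    intro i
    have h := norm_sub_norm_le z (w i)
    have := hw i
    linarith
  have habs1n : ‖1 / (n : ℂ)‖ = 1 / (n : ℝ) := by
    simp
  set c : ℂ := (starRingEnd ℂ) z / ((a ^ 2 - 1 : ℝ) : ℂ) with hc
  set avg : ℂ := (1 / (n : ℂ)) * ∑ i, 1 / (z - w i) with havg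
  have hdiff : ‖avg - c‖ ≤ 1 / (a ^ 2 - 1) := by
    have heq : avg - c = (1 / (n : ℂ)) * ∑ i, (1 / (z - w i) - c) := by
      rw [havg, Finset.sum_sub_distrib, Finset.sum_const, Finset.card_univ,
        Fintype.card_fin, nsmul_eq_mul, mul_sub]
      field_simp
    rw [heq, norm_mul, habs1n]
    have h1 : ‖∑ i, (1 / (z - w i) - c)‖ ≤ (n : ℝ) * (1 / (a ^ 2 - 1)) := by
      refine (norm_sum_le _ _).trans ?_
      calc (∑ i : Fin n, ‖1 / (z - w i) - c‖)
          ≤ ∑ _i : Fin n, 1 / (a ^ 2 - 1) :=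
            Finset.sum_le_sum fun i _ => key_disk z (w i) (hw i) hz
        _ = (n : ℝ) * (1 / (a ^ 2 - 1)) := by
            rw [Finset.sum_const, Finset.card_univ, Fintype.card_fin, nsmul_eq_mul]
    calc 1 / (n : ℝ) * ‖∑ i, (1 / (z - w i) - c)‖
        ≤ 1 / (n : ℝ) * ((n : ℝ) * (1 / (a ^ 2 - 1))) :=
          mul_le_mul_of_nonneg_left h1 (by positivity)
      _ = 1 / (a ^ 2 - 1) := by field_simp
  constructor
  · have hcabs : ‖c‖ = a / (a ^ 2 - 1) := by
      rw [hc, norm_div, Complex.norm_conj, Complex.norm_real, Real.norm_eq_abs, abs_of_pos hs, ha]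
    have h2 : ‖c‖ ≤ ‖avg‖ + ‖avg - c‖ := by
      have h3 : c = avg - (avg - c) := by ring
      calc ‖c‖ = ‖avg - (avg - c)‖ := by rw [← h3]
        _ ≤ ‖avg‖ + ‖avg - c‖ := by
            exact norm_sub_le avg (avg - c)
    have key : a / (a ^ 2 - 1) - 1 / (a ^ 2 - 1) = 1 / (a + 1) := by
      have h5 : a ^ 2 - 1 ≠ 0 := ne_of_gt hs
      have h6 : a + 1 ≠ 0 := by linarith
      field_simp
      ring
    rw [hcabs] at h2
    linarith
  · have h4 : ‖avg‖ ≤ 1 / (n : ℝ) * ((n : ℝ) * (1 / (a - 1))) := by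
      rw [havg, norm_mul, habs1n]
      refine mul_le_mul_of_nonneg_left ?_ (by positivity)
      refine (norm_sum_le _ _).trans ?_
      calc (∑ i : Fin n, ‖1 / (z - w i)‖)
          ≤ ∑ _i : Fin n, 1 / (a - 1) := by
            refine Finset.sum_le_sum fun i _ => ?_
            rw [norm_div, norm_one]
            exact one_div_le_one_div_of_le ha1 (hterm i)
        _ = (n : ℝ) * (1 / (a - 1)) := by
            rw [Finset.sum_const, Finset.card_univ, Fintype.card_fin, nsmul_eq_mul]
    calc ‖avg‖ ≤ 1 / (n : ℝ) * ((n : ℝ) * (1 / (a - 1))) := h4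
      _ = 1 / (a - 1) := by field_simp
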